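/- Let X be a real Hilbert space, B a subset of X, and f : B → ℝ, G : B → X bounded functions satisfying condition (C): f(x) ≥ f(y) + ⟨G(y), x − y⟩ for all x, y ∈ B. Set C := 2·sup_{z∈B} ‖G(z)‖, and for each y ∈ B define ψ_y : X → ℝ by ψ_y(x) = sup_{z∈B} { f(z) + ⟨G(z), x − z⟩ − f(y) − ⟨G(y), x − y⟩ }. Then for every y ∈ B: ψ_y is everywhere finite, convex, and C-Lipschitz on X, and moreover ψ_y(y) = 0 and 0 ≤ ψ_y(x) ≤ C‖x − y‖ for all x ∈ X. -/
import Mathlib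


open Set

local notation "⟪" x ", " y "⟫" => @inner ℝ _ _ x y

/-- properties of the functions ψ_y. -/
theorem psi_properties
    {X : Type*} [NormedAddCommGroup X] [InnerProductSpace ℝ X] [CompleteSpace X]
    (B : Set X) (f : X → ℝ) (G : X → X)
    (hfbd : ∃ Mf : ℝ, ∀ z ∈ B, |f z| ≤ Mf) (hGbd : ∃ MG : ℝ, ∀ z ∈ B, ‖G z‖ ≤ MG)
    (hC : ∀ x ∈ B, ∀ y ∈ B, f x ≥ f y + ⟪G y, x - y⟫)
    (C : ℝ) (hCdef : C = 2 * sSup ((fun z => ‖G z‖) '' B))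
    (ψ : X → X → ℝ)
    (hψ : ∀ y ∈ B, ∀ x : X,
      ψ y x = sSup ((fun z => f z + ⟪G z, x - z⟫ - f y - ⟪G y, x - y⟫) '' B)) :
    ∀ y ∈ B,
      (∀ x : X, BddAbove ((fun z => f z + ⟪G z, x - z⟫ - f y - ⟪G y, x - y⟫) '' B)) ∧
      ConvexOn ℝ univ (ψ y) ∧
      (∀ x x' : X, |ψ y x - ψ y x'| ≤ C * ‖x - x'‖) ∧
      ψ y y = 0 ∧
      (∀ x : X, 0 ≤ ψ y x ∧ ψ y x ≤ C * ‖x - y‖) := by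
  intro y hy
  obtain ⟨MG, hMG⟩ := hGbd
  set g : X → X → ℝ := fun z x => f z + ⟪G z, x - z⟫ - f y - ⟪G y, x - y⟫ with hg
  have hSbd : BddAbove ((fun z => ‖G z‖) '' B) := by
    exact ⟨MG, by rintro _ ⟨z, hz, rfl⟩; exact hMG z hz⟩
  have hGle : ∀ z ∈ B, ‖G z‖ ≤ sSup ((fun z => ‖G z‖) '' B) := fun z hz =>
    le_csSup hSbd ⟨z, hz, rfl⟩
  -- difference identity
  have hdiff : ∀ z x x' : X, g z x - g z x' = ⟪G z - G y, x - x'⟫ := by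
    intro z x x'
    simp only [hg, inner_sub_left, inner_sub_right]
    ring
  -- bound on the inner product
  have hCb : ∀ z ∈ B, ∀ v : X, ⟪G z - G y, v⟫ ≤ C * ‖v‖ := by
    intro z hz v
    calc ⟪G z - G y, v⟫ ≤ ‖G z - G y‖ * ‖v‖ := real_inner_le_norm _ _
    _ ≤ C * ‖v‖ := by
        apply mul_le_mul_of_nonneg_right _ (norm_nonneg v)
        calc ‖G z - G y‖ ≤ ‖G z‖ + ‖G y‖ := norm_sub_le _ _
        _ ≤ C := by rw [hCdef]; have := hGle z hz; have := hGle y hy; linarith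
  -- g z y ≤ 0
  have hgy : ∀ z ∈ B, g z y ≤ 0 := by
    intro z hz
    have := hC y hy z hz
    simp only [hg, sub_self, inner_zero_right]
    linarith
  -- g y x = 0
  have hgyx : ∀ x : X, g y x = 0 := by intro x; simp [hg]
  -- pointwise bound
  have hgle : ∀ z ∈ B, ∀ x : X, g z x ≤ C * ‖x - y‖ := by
    intro z hz x
    have h1 := hdiff z x y
    have h2 := hCb z hz (x - y)
    have h3 := hgy z hz
    linarith
  have hbdd : ∀ x : X, BddAbove ((fun z => g z x) '' B) := by
    intro x
    exact ⟨C * ‖x - y‖, by rintro _ ⟨z, hz, rfl⟩; exact hgle z hz x⟩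
  have hne : ∀ x : X, ((fun z => g z x) '' B).Nonempty := fun x => ⟨g y x, y, hy, rfl⟩
  have hψle : ∀ x : X, ψ y x ≤ C * ‖x - y‖ := by
    intro x
    rw [hψ y hy x]
    exact csSup_le (hne x) (by rintro _ ⟨z, hz, rfl⟩; exact hgle z hz x)
  have hψge : ∀ x : X, 0 ≤ ψ y x := by
    intro x
    rw [hψ y hy x]
    calc (0:ℝ) = g y x := (hgyx x).symm
    _ ≤ sSup ((fun z => g z x) '' B) := le_csSup (hbdd x) ⟨y, hy, rfl⟩
  have hψy : ψ y y = 0 := by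
    have h1 := hψge y
    have h2 := hψle y
    simp only [sub_self, norm_zero, mul_zero] at h2
    linarith
  have hlip : ∀ x x' : X, ψ y x ≤ ψ y x' + C * ‖x - x'‖ := by
    intro x x'
    rw [hψ y hy x]
    apply csSup_le (hne x)
    rintro _ ⟨z, hz, rfl⟩
    have h1 := hdiff z x x'
    have h2 := hCb z hz (x - x')
    have h3 : g z x' ≤ ψ y x' := by
      rw [hψ y hy x']; exact le_csSup (hbdd x') ⟨z, hz, rfl⟩
    linarith
  refine ⟨hbdd, ?_, ?_, hψy, fun x => ⟨hψge x, hψle x⟩⟩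
  · refine ⟨convex_univ, ?_⟩
    intro x _ x' _ a b ha hb hab
    rw [hψ y hy (a • x + b • x')]
    apply csSup_le (hne _)
    rintro _ ⟨z, hz, rfl⟩
    have haff : g z (a • x + b • x') = a * g z x + b * g z x' := by
      simp only [hg, inner_sub_left, inner_sub_right, inner_add_right,
        real_inner_smul_right]
      have hb1 : b = 1 - a := by linarith
      subst hb1
      ring
    have h3 : g z x ≤ ψ y x := by
      rw [hψ y hy x]; exact le_csSup (hbdd x) ⟨z, hz, rfl⟩
    have h4 : g z x' ≤ ψ y x' := by
      rw [hψ y hy x']; exact le_csSup (hbdd x') ⟨z, hz, rfl⟩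
    show g z (a • x + b • x') ≤ a • ψ y x + b • ψ y x'
    calc g z (a • x + b • x') = a * g z x + b * g z x' := haff
    _ ≤ a * ψ y x + b * ψ y x' :=
        add_le_add (mul_le_mul_of_nonneg_left h3 ha)
          (mul_le_mul_of_nonneg_left h4 hb)
    _ = a • ψ y x + b • ψ y x' := by simp [smul_eq_mul]
  · intro x x'
    rw [abs_sub_le_iff]
    constructor
    · have := hlip x x'; linarith
    · have := hlip x' x
      rw [show ‖x' - x‖ = ‖x - x'‖ from norm_sub_rev _ _] at this
      linarith
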